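/- Let N ≥ 2 be an integer and β a real number with β > N, and define ψ(r) = (1 + (r-1)β)^{1/N} for real r ≥ 1. Then there exists a unique r̄ > 1 with ψ(r̄) = r̄, and for every initial value r₀ > 1 the sequence defined by r_{i+1} = ψ(r_i), i = 0, 1, 2, …, converges monotonically to r̄ (nondecreasing if r₀ ≤ r̄ and nonincreasing if r₀ ≥ r̄). -/

import Mathlib

open Set

private lemma aux_strict_convex (N : ℕ) (hN : 2 ≤ N) (β : ℝ) :
    StrictConvexOn ℝ (Set.Ici (0:ℝ)) (fun r : ℝ => r ^ N - β * r + (β - 1)) := by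
  have h1 : StrictConvexOn ℝ (Set.Ici (0:ℝ)) (fun r : ℝ => r ^ N) := strictConvexOn_pow hN
  have h2 : ConvexOn ℝ (Set.Ici (0:ℝ)) (fun r : ℝ => -(β * r) + (β - 1)) := by
    refine ⟨convex_Ici 0, fun x _ y _ a b ha hb hab => le_of_eq ?_⟩
    simp only [smul_eq_mul]
    linear_combination (1 - β) * hab
  have := h1.add_convexOn h2
  convert this using 2 with r
  · rfl
  simp [Pi.add_apply]
  ring

private lemma aux_between (f : ℝ → ℝ) (hf : StrictConvexOn ℝ (Set.Ici (0:ℝ)) f)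
    (h1 : f 1 = 0) {x y : ℝ} (hy : f y = 0) (h1x : 1 < x) (hxy : x < y) : f x < 0 := by
  have hy1 : (1:ℝ) < y := lt_trans h1x hxy
  set a : ℝ := (y - x) / (y - 1) with ha_def
  set b : ℝ := (x - 1) / (y - 1) with hb_def
  have hden : (0:ℝ) < y - 1 := by linarith
  have ha : 0 < a := div_pos (by linarith) hden
  have hb : 0 < b := div_pos (by linarith) hden
  have hab : a + b = 1 := by
    rw [ha_def, hb_def, ← add_div, show y - x + (x - 1) = y - 1 by ring,
      div_self hden.ne']
  have hcomb : a • (1:ℝ) + b • y = x := by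
    rw [smul_eq_mul, smul_eq_mul, ha_def, hb_def, div_mul_eq_mul_div, div_mul_eq_mul_div,
      ← add_div, div_eq_iff hden.ne']
    ring
  have := hf.2 (show (1:ℝ) ∈ Set.Ici (0:ℝ) by norm_num)
    (show y ∈ Set.Ici (0:ℝ) by simp; linarith) (by linarith : (1:ℝ) ≠ y) ha hb hab
  rw [hcomb, h1, hy] at this
  simpa using this

private lemma aux_after (f : ℝ → ℝ) (hf : StrictConvexOn ℝ (Set.Ici (0:ℝ)) f)
    (h1 : f 1 = 0) {x y : ℝ} (hy : f y = 0) (h1y : 1 < y) (hyx : y < x) : 0 < f x := by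
  set a : ℝ := (x - y) / (x - 1) with ha_def
  set b : ℝ := (y - 1) / (x - 1) with hb_def
  have hden : (0:ℝ) < x - 1 := by linarith
  have ha : 0 < a := div_pos (by linarith) hden
  have hb : 0 < b := div_pos (by linarith) hden
  have hab : a + b = 1 := by
    rw [ha_def, hb_def, ← add_div, show x - y + (y - 1) = x - 1 by ring,
      div_self hden.ne']
  have hcomb : a • (1:ℝ) + b • x = y := by
    rw [smul_eq_mul, smul_eq_mul, ha_def, hb_def, div_mul_eq_mul_div, div_mul_eq_mul_div,
      ← add_div, div_eq_iff hden.ne']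
    ring
  have := hf.2 (show (1:ℝ) ∈ Set.Ici (0:ℝ) by norm_num)
    (show x ∈ Set.Ici (0:ℝ) by simp; linarith) (by linarith : (1:ℝ) ≠ x) ha hb hab
  rw [hcomb, h1, hy] at this
  simp only [smul_eq_mul, mul_zero, zero_add] at this
  nlinarith

theorem stmt_6 (N : ℕ) (hN : 2 ≤ N) (β : ℝ) (hβ : (N : ℝ) < β)
    (ψ : ℝ → ℝ) (hψ : ∀ r : ℝ, ψ r = (1 + (r - 1) * β) ^ ((1 : ℝ) / N)) :
    (∃! rbar : ℝ, 1 < rbar ∧ ψ rbar = rbar) ∧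
    (∀ rbar : ℝ, 1 < rbar → ψ rbar = rbar →
      ∀ r₀ : ℝ, 1 < r₀ →
        Filter.Tendsto (fun i : ℕ => ψ^[i] r₀) Filter.atTop (nhds rbar) ∧
        (r₀ ≤ rbar → Monotone (fun i : ℕ => ψ^[i] r₀)) ∧
        (rbar ≤ r₀ → Antitone (fun i : ℕ => ψ^[i] r₀))) := by
  have hN2 : (2:ℝ) ≤ (N:ℝ) := by exact_mod_cast hN
  have hNne : N ≠ 0 := by omega
  have hβ2 : (2:ℝ) < β := lt_of_le_of_lt hN2 hβ
  have hβ0 : (0:ℝ) < β := by linarith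
  set g : ℝ → ℝ := fun r : ℝ => r ^ N - β * r + (β - 1) with hg_def
  have hg1 : g 1 = 0 := by simp [hg_def]
  have hconv := aux_strict_convex N hN β
  -- basic facts about ψ
  have hfpos : ∀ r : ℝ, 1 < r → (0:ℝ) < 1 + (r - 1) * β := by
    intro r hr; nlinarith
  have hψpow : ∀ r : ℝ, 1 ≤ r → (ψ r) ^ N = 1 + (r - 1) * β := by
    intro r hr
    rw [hψ, one_div]
    exact Real.rpow_inv_natCast_pow (by nlinarith) hNne
  have hψgt1 : ∀ r : ℝ, 1 < r → 1 < ψ r := by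
    intro r hr
    rw [hψ]
    rw [Real.one_lt_rpow_iff_of_pos (hfpos r hr)]
    left
    constructor
    · nlinarith
    · positivity
  have hψnn : ∀ r : ℝ, 1 < r → 0 ≤ ψ r := fun r hr => le_of_lt (lt_trans one_pos (hψgt1 r hr))
  have hψmono : ∀ r s : ℝ, 1 ≤ r → r ≤ s → ψ r ≤ ψ s := by
    intro r s hr hrs
    rw [hψ, hψ]
    apply Real.rpow_le_rpow (by nlinarith) (by nlinarith) (by positivity)
  -- fixed point characterization
  have hfix_iff : ∀ r : ℝ, 1 < r → (ψ r = r ↔ g r = 0) := by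
    intro r hr
    constructor
    · intro h
      have := hψpow r hr.le
      rw [h] at this
      simp only [hg_def]
      linarith
    · intro h
      have hrN : r ^ N = 1 + (r - 1) * β := by simp only [hg_def] at h; linarith
      rw [hψ, ← hrN, one_div]
      exact Real.pow_rpow_inv_natCast (by linarith) hNne
  -- comparison: r < ψ r ↔ r^N < 1+(r-1)β i.e. g r < 0
  have hlt_iff : ∀ r : ℝ, 1 < r → (r < ψ r ↔ g r < 0) := by
    intro r hr
    rw [show (r < ψ r ↔ r ^ N < (ψ r) ^ N) from
      (pow_lt_pow_iff_left₀ (by linarith) (hψnn r hr) hNne).symm, hψpow r hr.le]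
    simp only [hg_def]
    constructor <;> intro h <;> linarith
  have hgt_iff : ∀ r : ℝ, 1 < r → (ψ r < r ↔ 0 < g r) := by
    intro r hr
    rw [show (ψ r < r ↔ (ψ r) ^ N < r ^ N) from
      (pow_lt_pow_iff_left₀ (hψnn r hr) (by linarith) hNne).symm, hψpow r hr.le]
    simp only [hg_def]
    constructor <;> intro h <;> linarith
  -- existence of a fixed point
  have hex : ∃ rbar : ℝ, 1 < rbar ∧ ψ rbar = rbar := by
    set δ : ℝ := (β - N) / (2 * β * N) with hδ_def
    have hδpos : 0 < δ := by
      apply div_pos (by linarith)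
      positivity
    have hNδ : (N:ℝ) * δ < 1/2 := by
      have hNδeq : (N:ℝ) * δ = (β - N) / (2 * β) := by
        rw [hδ_def]
        have hN0 : (N:ℝ) ≠ 0 := by positivity
        field_simp
      rw [hNδeq, div_lt_iff₀ (by positivity)]
      linarith
    have hgδ : g (1 + δ) < 0 := by
      have hber : 1 - (N:ℝ) * δ ≤ (1 - δ) ^ N := by
        have hδ4 : δ < 1/4 := by nlinarith [mul_le_mul_of_nonneg_right hN2 hδpos.le]
        have := one_add_mul_le_pow (a := -δ) (by linarith) N
        simpa [mul_comm, sub_eq_add_neg] using this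
      have hδ1 : δ < 1 := by nlinarith
      have hple : (1 + δ) ^ N * (1 - δ) ^ N ≤ 1 := by
        rw [← mul_pow]
        apply pow_le_one₀ (by nlinarith) (by nlinarith)
      have hpow_pos : 0 < (1 - δ) ^ N := pow_pos (by linarith) N
      have hmain : (1 + δ) ^ N < 1 + β * δ := by
        have h1 : (1 + δ) ^ N ≤ 1 / (1 - (N:ℝ) * δ) := by
          rw [le_div_iff₀ (by linarith)]
          calc (1 + δ) ^ N * (1 - (N:ℝ) * δ) ≤ (1 + δ) ^ N * (1 - δ) ^ N := by
                apply mul_le_mul_of_nonneg_left hber (by positivity)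
            _ ≤ 1 := hple
        have h2 : 1 / (1 - (N:ℝ) * δ) < 1 + β * δ := by
          rw [div_lt_iff₀ (by linarith)]
          have : β * (N:ℝ) * δ * δ = (β - N) / 2 * δ := by
            rw [hδ_def]; field_simp
          nlinarith
        linarith
      simp only [hg_def]
      nlinarith
    have hgβ : 0 < g β := by
      have : β ^ 2 ≤ β ^ N := pow_le_pow_right₀ (by linarith) hN
      simp only [hg_def]
      nlinarith
    have h1δβ : 1 + δ ≤ β := by nlinarith
    have hcont : ContinuousOn g (Set.Icc (1 + δ) β) := by
      apply Continuous.continuousOn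
      simp only [hg_def]
      fun_prop
    have := intermediate_value_Ioo h1δβ hcont
    have h0mem : (0:ℝ) ∈ Set.Ioo (g (1 + δ)) (g β) := ⟨hgδ, hgβ⟩
    obtain ⟨rbar, hrmem, hr0⟩ := this h0mem
    refine ⟨rbar, by linarith [hrmem.1], ?_⟩
    rw [hfix_iff rbar (by linarith [hrmem.1])]
    exact hr0
  obtain ⟨rb, hrb1, hrbfix⟩ := hex
  -- uniqueness
  have huniq : ∀ r : ℝ, 1 < r → ψ r = r → r = rb := by
    intro r hr hrfix
    by_contra hne
    have hgr : g r = 0 := (hfix_iff r hr).mp hrfix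
    have hgrb : g rb = 0 := (hfix_iff rb hrb1).mp hrbfix
    rcases lt_or_gt_of_ne hne with h | h
    · exact absurd hgr (ne_of_lt (aux_between g hconv hg1 hgrb hr h))
    · exact absurd hgr (ne_of_gt (aux_after g hconv hg1 hgrb hrb1 h))
  constructor
  · exact ⟨rb, ⟨hrb1, hrbfix⟩, fun r ⟨hr1, hrf⟩ => huniq r hr1 hrf⟩
  · intro rbar hrbar1 hrbarfix r₀ hr₀
    have hrbar_eq : rbar = rb := huniq rbar hrbar1 hrbarfix
    have hgrbar : g rbar = 0 := (hfix_iff rbar hrbar1).mp hrbarfix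
    set s : ℕ → ℝ := fun i => ψ^[i] r₀ with hs_def
    have hs_succ : ∀ i, s (i + 1) = ψ (s i) := fun i => Function.iterate_succ_apply' ψ i r₀
    have hs0 : s 0 = r₀ := rfl
    -- step lemmas
    have stepA : ∀ r : ℝ, 1 < r → r ≤ rbar → r ≤ ψ r ∧ ψ r ≤ rbar ∧ 1 < ψ r := by
      intro r hr hrle
      refine ⟨?_, ?_, hψgt1 r hr⟩
      · rcases eq_or_lt_of_le hrle with h | h
        · subst h; rw [hrbarfix]
        · exact le_of_lt ((hlt_iff r hr).mpr (aux_between g hconv hg1 hgrbar hr h))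
      · calc ψ r ≤ ψ rbar := hψmono r rbar hr.le hrle
          _ = rbar := hrbarfix
    have stepB : ∀ r : ℝ, 1 < r → rbar ≤ r → ψ r ≤ r ∧ rbar ≤ ψ r ∧ 1 < ψ r := by
      intro r hr hrge
      refine ⟨?_, ?_, hψgt1 r hr⟩
      · rcases eq_or_lt_of_le hrge with h | h
        · subst h; rw [hrbarfix]
        · exact le_of_lt ((hgt_iff r hr).mpr (aux_after g hconv hg1 hgrbar hrbar1 h))
      · calc rbar = ψ rbar := hrbarfix.symm
          _ ≤ ψ r := hψmono rbar r hrbar1.le hrge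
    -- continuity of ψ
    have hψcont : ∀ x : ℝ, ContinuousAt ψ x := by
      intro x
      have : ψ = fun r => (1 + (r - 1) * β) ^ ((1:ℝ)/N) := funext hψ
      rw [this]
      apply ContinuousAt.comp (g := fun y : ℝ => y ^ ((1:ℝ)/N))
      · exact Real.continuousAt_rpow_const _ _ (Or.inr (by positivity))
      · fun_prop
    rcases le_total r₀ rbar with hcase | hcase
    · -- increasing case
      have hinv : ∀ i, 1 < s i ∧ s i ≤ rbar := by
        intro i
        induction i with
        | zero => exact ⟨hr₀, hcase⟩
        | succ n ih =>
          rw [hs_succ]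
          obtain ⟨_, h2, h3⟩ := stepA (s n) ih.1 ih.2
          exact ⟨h3, h2⟩
      have hmono : Monotone s := by
        apply monotone_nat_of_le_succ
        intro n
        rw [hs_succ]
        exact (stepA (s n) (hinv n).1 (hinv n).2).1
      have hbdd : BddAbove (Set.range s) := ⟨rbar, fun x ⟨i, hi⟩ => hi ▸ (hinv i).2⟩
      have htend : Filter.Tendsto s Filter.atTop (nhds (⨆ i, s i)) :=
        tendsto_atTop_ciSup hmono hbdd
      set L := ⨆ i, s i with hL_def
      have hLge : r₀ ≤ L := hs0 ▸ le_ciSup hbdd 0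
      have hLle : L ≤ rbar := ciSup_le fun i => (hinv i).2
      have hL1 : 1 < L := lt_of_lt_of_le hr₀ hLge
      have hLfix : ψ L = L := by
        have h1 : Filter.Tendsto (fun i => s (i + 1)) Filter.atTop (nhds L) :=
          htend.comp (Filter.tendsto_add_atTop_nat 1)
        have h2 : Filter.Tendsto (fun i => ψ (s i)) Filter.atTop (nhds (ψ L)) :=
          ((hψcont L).tendsto).comp htend
        simp only [← hs_succ] at h2
        exact tendsto_nhds_unique h2 h1
      have hLrbar : L = rbar := by
        rw [huniq L hL1 hLfix, hrbar_eq]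
      refine ⟨hLrbar ▸ htend, fun _ => hmono, fun hle => ?_⟩
      have : r₀ = rbar := le_antisymm hcase hle
      have hconst : ∀ i, s i = rbar := by
        intro i
        induction i with
        | zero => exact this
        | succ n ih => rw [hs_succ, ih, hrbarfix]
      intro a b _
      rw [hconst a, hconst b]
    · -- decreasing case
      have hinv : ∀ i, 1 < s i ∧ rbar ≤ s i := by
        intro i
        induction i with
        | zero => exact ⟨hr₀, hcase⟩
        | succ n ih =>
          rw [hs_succ]
          obtain ⟨_, h2, h3⟩ := stepB (s n) ih.1 ih.2
          exact ⟨h3, h2⟩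
      have hanti : Antitone s := by
        apply antitone_nat_of_succ_le
        intro n
        rw [hs_succ]
        exact (stepB (s n) (hinv n).1 (hinv n).2).1
      have hbdd : BddBelow (Set.range s) := ⟨rbar, fun x ⟨i, hi⟩ => hi ▸ (hinv i).2⟩
      have htend : Filter.Tendsto s Filter.atTop (nhds (⨅ i, s i)) :=
        tendsto_atTop_ciInf hanti hbdd
      set L := ⨅ i, s i with hL_def
      have hLge : rbar ≤ L := le_ciInf fun i => (hinv i).2
      have hL1 : 1 < L := lt_of_lt_of_le hrbar1 hLge
      have hLfix : ψ L = L := by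
        have h1 : Filter.Tendsto (fun i => s (i + 1)) Filter.atTop (nhds L) :=
          htend.comp (Filter.tendsto_add_atTop_nat 1)
        have h2 : Filter.Tendsto (fun i => ψ (s i)) Filter.atTop (nhds (ψ L)) :=
          ((hψcont L).tendsto).comp htend
        simp only [← hs_succ] at h2
        exact tendsto_nhds_unique h2 h1
      have hLrbar : L = rbar := by
        rw [huniq L hL1 hLfix, hrbar_eq]
      refine ⟨hLrbar ▸ htend, fun hle => ?_, fun _ => hanti⟩
      have : r₀ = rbar := le_antisymm hle hcase
      have hconst : ∀ i, s i = rbar := by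
        intro i
        induction i with
        | zero => exact this
        | succ n ih => rw [hs_succ, ih, hrbarfix]
      intro a b _
      rw [hconst a, hconst b]
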